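/- Let M_1, …, M_n be DFAs over a common alphabet Σ, and let G be the labeled graph obtained from the second reduction construction applied to M_1, …, M_n. Then ⋃_{i=1}^n L(M_i) = Σ* if and only if ⟨G⟩ is a shift of finite type. -/

import Mathlib

/-- A labeled graph over vertex type `V` and alphabet `A`, given by its
labeled-edge relation: `Edge p a q` means there is an edge labeled `a`
from `p` to `q`. -/
structure LabeledGraph (V A : Type) where
  Edge : V → A → V → Prop

namespace LabeledGraph

variable {V A : Type}

/-- `G.Walk p w q` : there is a (finite) path from `p` to `q` labeled `w`. -/
def Walk (G : LabeledGraph V A) : V → List A → V → Prop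
  | p, [], q => p = q
  | p, a :: w, q => ∃ r, G.Edge p a r ∧ Walk G r w q

/-- The follower set of a vertex: labels of finite paths starting at `q`. -/
def follower (G : LabeledGraph V A) (q : V) : Set (List A) :=
  { w | ∃ q', G.Walk q w q' }

/-- The transition action on sets of vertices: `S·w`. -/
def transSet (G : LabeledGraph V A) (S : Set V) (w : List A) : Set V :=
  { q' | ∃ q ∈ S, G.Walk q w q' }

/-- `G` is deterministic (right-resolving). -/
def Deterministic (G : LabeledGraph V A) : Prop :=
  ∀ p a q q', G.Edge p a q → G.Edge p a q' → q = q'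

/-- `G` is essential: every vertex has an outgoing and an incoming edge. -/
def Essential (G : LabeledGraph V A) : Prop :=
  ∀ q, (∃ a r, G.Edge q a r) ∧ (∃ a p, G.Edge p a q)

/-- The sofic shift presented by `G`: labels of bi-infinite paths. -/
def shift (G : LabeledGraph V A) : Set (ℤ → A) :=
  { x | ∃ v : ℤ → V, ∀ j : ℤ, G.Edge (v j) (x j) (v (j + 1)) }

/-- `w` is a synchronizing word for `G`: `Q_G · w` is a singleton. -/
def SyncWord (G : LabeledGraph V A) (w : List A) : Prop :=
  ∃ r, G.transSet Set.univ w = {r}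

/-- A vertex `q` is synchronizing: some word synchronizes to `q`. -/
def SyncVertex (G : LabeledGraph V A) (q : V) : Prop :=
  ∃ w, G.transSet Set.univ w = {q}

/-- `G` is synchronizing: every vertex is synchronizing. -/
def Synchronizing (G : LabeledGraph V A) : Prop :=
  ∀ q, G.SyncVertex q

/-- `G` is follower-separated. -/
def FollowerSeparated (G : LabeledGraph V A) : Prop :=
  ∀ p q, G.follower p = G.follower q → p = q

/-- `G` is irreducible (strongly connected). -/
def StronglyConnected (G : LabeledGraph V A) : Prop :=
  ∀ p q, ∃ w, G.Walk p w q

/-- `q` is reachable from `p`. -/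
def Reachable (G : LabeledGraph V A) (p q : V) : Prop :=
  ∃ w, G.Walk p w q

/-- `C` is an irreducible component: an equivalence class of mutual reachability. -/
def IsIrredComponent (G : LabeledGraph V A) (C : Set V) : Prop :=
  ∃ p, C = { q | G.Reachable p q ∧ G.Reachable q p }

/-- `C` is terminal: everything reachable from `C` lies in `C`. -/
def TerminalSet (G : LabeledGraph V A) (C : Set V) : Prop :=
  ∀ p ∈ C, ∀ q, G.Reachable p q → q ∈ C

/-- `C` is initial: everything that reaches `C` lies in `C`. -/
def InitialSet (G : LabeledGraph V A) (C : Set V) : Prop :=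
  ∀ q ∈ C, ∀ p, G.Reachable p q → p ∈ C

/-- Subgraph induced by a set `P` of vertices. -/
def induce (G : LabeledGraph V A) (P : Set V) : LabeledGraph P A where
  Edge := fun p a q => G.Edge p.1 a q.1

/-- The graph `Ĝ`: vertices are ordered pairs of distinct vertices of `G`,
with an edge labeled `a` from `(p₁,p₂)` to `(q₁,q₂)` iff `G` has edges labeled
`a` from `p₁` to `q₁` and from `p₂` to `q₂`. -/
def pairGraph (G : LabeledGraph V A) : LabeledGraph { pq : V × V // pq.1 ≠ pq.2 } A where
  Edge := fun x a y => G.Edge x.1.1 a y.1.1 ∧ G.Edge x.1.2 a y.1.2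

end LabeledGraph

/-- The word `w` appears in the bi-infinite sequence `x`. -/
def AppearsIn {A : Type} (w : List A) (x : ℤ → A) : Prop :=
  ∃ i : ℤ, ∀ n : Fin w.length, x (i + (n : ℕ)) = w.get n

/-- The language of a subset of the full shift: all finite words appearing
in some point of `X`. -/
def lang {A : Type} (X : Set (ℤ → A)) : Set (List A) :=
  { w | ∃ x ∈ X, AppearsIn w x }

/-- `X` is a shift space. -/
def IsShiftSpace {A : Type} (X : Set (ℤ → A)) : Prop :=
  ∃ F : Set (List A), X = { x | ∀ w ∈ F, ¬ AppearsIn w x }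

/-- `X` is a shift of finite type. -/
def IsSFT {A : Type} (X : Set (ℤ → A)) : Prop :=
  ∃ F : Set (List A), F.Finite ∧ X = { x | ∀ w ∈ F, ¬ AppearsIn w x }

/-- `w` is intrinsically synchronizing for `X`. -/
def IntrinsicallySync {A : Type} (X : Set (ℤ → A)) (w : List A) : Prop :=
  w ∈ lang X ∧ ∀ u v, u ++ w ∈ lang X → w ++ v ∈ lang X → u ++ (w ++ v) ∈ lang X

/-- `X` is an irreducible shift space. -/
def IrreducibleShift {A : Type} (X : Set (ℤ → A)) : Prop :=
  ∀ u ∈ lang X, ∀ v ∈ lang X, ∃ w, u ++ (w ++ v) ∈ lang X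

/-- The follower set of a word `u` in `X`. -/
def followerX {A : Type} (X : Set (ℤ → A)) (u : List A) : Set (List A) :=
  { w | u ++ w ∈ lang X }

/-- `X` is `M`-step: every word of `B(X)` of length at least `M` is
intrinsically synchronizing for `X`. -/
def MStep {A : Type} (X : Set (ℤ → A)) (M : ℕ) : Prop :=
  ∀ w ∈ lang X, M ≤ w.length → IntrinsicallySync X w

/-- A deterministic finite automaton over state type `Q` and alphabet `A`. -/
structure DFA' (Q A : Type) where
  step : Q → A → Q
  start : Q
  accept : Set Q

/-- Extended transition function. -/
def DFA'.evalFrom {Q A : Type} (M : DFA' Q A) (q : Q) (w : List A) : Q :=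
  w.foldl M.step q

/-- The language of a DFA. -/
def DFA'.lang {Q A : Type} (M : DFA' Q A) : Set (List A) :=
  { w | M.evalFrom M.start w ∈ M.accept }

/-- Alphabet `Σ ∪ {◁, ▷, ℓ, ⋆}`. -/
inductive SymB (A : Type) : Type
  | letter : A → SymB A
  | lm : SymB A    -- ◁
  | rm : SymB A    -- ▷
  | ell : SymB A   -- ℓ
  | star : SymB A  -- ⋆

/-- Vertices of the second reduction construction: the terminal state `t`,
the special state `s*`, and the DFA states. -/
inductive V2 {n : ℕ} (Q : Fin n → Type) : Type
  | t : V2 Q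
  | sstar : V2 Q
  | st : (i : Fin n) → Q i → V2 Q

/-- Edges of the second reduction construction. -/
inductive Red2Edge {n : ℕ} {Q : Fin n → Type} {A : Type} (M : ∀ i, DFA' (Q i) A) :
    V2 Q → SymB A → V2 Q → Prop
  /-- self loop labeled `⋆` on `t` -/
  | tLoop : Red2Edge M .t .star .t
  /-- self loop labeled `a` on `s*` for each `a ∈ Σ` -/
  | sstarLetter (a : A) : Red2Edge M .sstar (.letter a) .sstar
  /-- self loop labeled `ℓ` on `s*` -/
  | sstarEll : Red2Edge M .sstar .ell .sstar
  /-- edge labeled `▷` from `s*` to `t` -/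
  | sstarExit : Red2Edge M .sstar .rm .t
  /-- the embedded DFA transitions -/
  | dfaStep (i : Fin n) (q : Q i) (a : A) :
      Red2Edge M (.st i q) (.letter a) (.st i ((M i).step q a))
  /-- edge labeled `◁` from each state of `M_i` to `s_i` -/
  | back (i : Fin n) (q : Q i) : Red2Edge M (.st i q) .lm (.st i ((M i).start))
  /-- edge labeled `▷` from each accepting state of `M_i` to `t` -/
  | exitAcc (i : Fin n) (q : Q i) :
      q ∈ (M i).accept → Red2Edge M (.st i q) .rm .t
  /-- self loop labeled `ℓ` on each DFA state -/
  | ellLoop (i : Fin n) (q : Q i) : Red2Edge M (.st i q) .ell (.st i q)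

/-- The labeled graph `G` of the second reduction construction. -/
def Red2 {n : ℕ} {Q : Fin n → Type} {A : Type} (M : ∀ i, DFA' (Q i) A) :
    LabeledGraph (V2 Q) (SymB A) where
  Edge := Red2Edge M

/-- The two-vertex graph `H` (vertices `false = q₁` and `true = q₂`):
self loops on `q₁` labeled `◁`, `ℓ`, and each `a ∈ Σ`; an edge labeled `▷`
from `q₁` to `q₂`; and a self loop labeled `⋆` on `q₂`. -/
def H2 (A : Type) : LabeledGraph Bool (SymB A) where
  Edge := fun x c y =>
    (x = false ∧ y = false ∧ (c = .lm ∨ c = .ell ∨ ∃ a, c = .letter a)) ∨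
    (x = false ∧ y = true ∧ c = .rm) ∨
    (x = true ∧ y = true ∧ c = .star)


open Classical

section Koenig
variable {S : Type}

def iterSeq (f : ℤ → S → S) : ℤ → ℕ → S → S
  | _, 0, s => s
  | j, (k+1), s => f (j + k) (iterSeq f j k s)

lemma iterSeq_shift (f : ℤ → S → S) (k : ℕ) : ∀ (j : ℤ) (s : S),
    iterSeq f j (k+1) s = iterSeq f (j+1) k (f j s) := by
  induction k with
  | zero => intro j s; simp [iterSeq]
  | succ k ih =>
    intro j s
    show f (j + (↑k+1)) (iterSeq f j (k+1) s) = f ((j+1) + ↑k) (iterSeq f (j+1) k (f j s))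
    rw [ih j s]
    congr 1
    omega

def ImK (f : ℤ → S → S) (j : ℤ) (k : ℕ) : Set S := Set.range (iterSeq f (j - k) k)

lemma ImK_antitone (f : ℤ → S → S) (j : ℤ) (k : ℕ) : ImK f j (k+1) ⊆ ImK f j k := by
  rintro s ⟨u, rfl⟩
  have h1 : (j - ((k : ℕ) + 1 : ℕ) : ℤ) + 1 = j - (k : ℕ) := by push_cast; ring
  rw [show ((k:ℕ)+1 : ℕ) = k + 1 from rfl, iterSeq_shift, h1]
  exact ⟨_, rfl⟩

lemma nonempty_iInter_of_antitone [Finite S] (C : ℕ → Set S)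
    (hsub : ∀ k, C (k+1) ⊆ C k) (hne : ∀ k, (C k).Nonempty) :
    (⋂ k, C k).Nonempty := by
  have hmono : Antitone C := antitone_nat_of_succ_le hsub
  obtain ⟨k0, hk0⟩ : ∃ k0, (C k0).ncard = sInf (Set.range fun k => (C k).ncard) :=
    Nat.sInf_mem (Set.range_nonempty _)
  have heq : ∀ k, k0 ≤ k → C k = C k0 := by
    intro k hk
    exact Set.eq_of_subset_of_ncard_le (hmono hk)
      (by rw [hk0]; exact Nat.sInf_le ⟨k, rfl⟩) (Set.toFinite _)
  obtain ⟨s, hs⟩ := hne k0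
  refine ⟨s, Set.mem_iInter.mpr fun k => ?_⟩
  rcases le_total k k0 with h | h
  · exact hmono h hs
  · rw [heq k h]; exact hs

def RK (f : ℤ → S → S) (j : ℤ) : Set S := ⋂ k, ImK f j k

lemma RK_nonempty [Finite S] [Nonempty S] (f : ℤ → S → S) (j : ℤ) : (RK f j).Nonempty :=
  nonempty_iInter_of_antitone _ (ImK_antitone f j) (fun _ => Set.range_nonempty _)

lemma RK_surj [Finite S] [Nonempty S] (f : ℤ → S → S) (j : ℤ) (s : S) (hs : s ∈ RK f j) :
    ∃ t ∈ RK f (j - 1), f (j - 1) t = s := by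
  have hmem : ∀ k, s ∈ ImK f j k := Set.mem_iInter.mp hs
  have hC : ∀ k, (ImK f (j-1) k ∩ {t | f (j-1) t = s}).Nonempty := by
    intro k
    obtain ⟨u, hu⟩ := hmem (k+1)
    have h1 : j - ((k:ℕ) + 1 : ℕ) = (j - 1) - (k : ℕ) := by push_cast; ring
    refine ⟨iterSeq f ((j-1) - (k:ℕ)) k u, ⟨_, rfl⟩, ?_⟩
    have h2 : (j - 1) - (k:ℕ) + (k:ℕ) = j - 1 := by ring
    have := hu
    rw [show ((k:ℕ)+1 : ℕ) = k + 1 from rfl] at this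
    simp only [iterSeq] at this
    rw [h1] at this
    rw [h2] at this
    exact this
  obtain ⟨t, ht⟩ := nonempty_iInter_of_antitone _
    (fun k => Set.inter_subset_inter_left _ (ImK_antitone f (j-1) k)) hC
  have ht' := Set.mem_iInter.mp ht
  exact ⟨t, Set.mem_iInter.mpr fun k => (ht' k).1, (ht' 0).2⟩

lemma exists_orbit [Finite S] [Nonempty S] (f : ℤ → S → S) :
    ∃ u : ℤ → S, ∀ j, u (j+1) = f j (u j) := by
  have hch : ∀ (j : ℤ) (s : S), ∃ t : S, s ∈ RK f j → (t ∈ RK f (j-1) ∧ f (j-1) t = s) := by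
    intro j s
    by_cases h : s ∈ RK f j
    · obtain ⟨t, ht, hft⟩ := RK_surj f j s h
      exact ⟨t, fun _ => ⟨ht, hft⟩⟩
    · exact ⟨Classical.arbitrary S, fun hh => absurd hh h⟩
  choose T hT using hch
  set w : ℕ → S := fun m => Nat.rec (RK_nonempty f 0).choose (fun m prev => T (-(m:ℤ)) prev) m
    with hw
  have hw0 : w 0 ∈ RK f 0 := (RK_nonempty f 0).choose_spec
  have hwsucc : ∀ m : ℕ, w (m+1) = T (-(m:ℤ)) (w m) := fun m => rfl
  have hwR : ∀ m : ℕ, w m ∈ RK f (-(m:ℤ)) := by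
    intro m
    induction m with
    | zero => simpa using hw0
    | succ m ih =>
      rw [hwsucc]
      have := (hT (-(m:ℤ)) (w m) ih).1
      have e : (-(m:ℤ) - 1) = (-((m:ℕ)+1 : ℕ) : ℤ) := by push_cast; ring
      rwa [e] at this
  have hwstep : ∀ m : ℕ, f (-(m:ℤ) - 1) (w (m+1)) = w m := by
    intro m
    rw [hwsucc]
    exact (hT (-(m:ℤ)) (w m) (hwR m)).2
  refine ⟨fun j => if 0 ≤ j then iterSeq f 0 j.toNat (w 0) else w (-j).toNat, fun j => ?_⟩
  beta_reduce
  rcases lt_trichotomy j (-1) with h | h | h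
  · rw [if_neg (by omega), if_neg (by omega)]
    have e1 : (-(j+1)).toNat + 1 = (-j).toNat := by omega
    have hst := hwstep (-(j+1)).toNat
    have e2 : (-((-(j+1)).toNat : ℤ) - 1) = j := by omega
    rw [e2, e1] at hst
    exact hst.symm
  · subst h
    rw [if_pos (by omega), if_neg (by omega)]
    have hst := hwstep 0
    have e0 : (-((0:ℕ):ℤ)) - 1 = -1 := by norm_num
    rw [e0] at hst
    have e1 : (-(-1:ℤ)).toNat = 1 := by norm_num
    have e2 : ((-1:ℤ)+1).toNat = 0 := by norm_num
    rw [e1, e2]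
    exact hst.symm
  · rw [if_pos (by omega), if_pos (by omega)]
    have e1 : (j+1).toNat = j.toNat + 1 := by omega
    rw [e1]
    show f (0 + (j.toNat:ℤ)) _ = _
    rw [show (0 + (j.toNat:ℤ)) = j by omega]

end Koenig

section Red2Lemmas

variable {n : ℕ} {Q : Fin n → Type} {A : Type}

/-- The action of a symbol on DFA states. -/
def symMap {QQ : Type} (D : DFA' QQ A) : SymB A → QQ → QQ
  | .letter a, s => D.step s a
  | .lm, _ => D.start
  | _, s => s

lemma evalFrom_append {QQ : Type} (D : DFA' QQ A) (s : QQ) (l l' : List A) :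
    D.evalFrom s (l ++ l') = D.evalFrom (D.evalFrom s l) l' :=
  List.foldl_append

/-- Any bi-infinite sequence avoiding `▷` and `⋆` lies in the shift. -/
lemma shift_of_tame (hn : 0 < n) (M : ∀ i, DFA' (Q i) A) [∀ i, Fintype (Q i)]
    (x : ℤ → SymB A) (hx : ∀ j, x j ≠ .rm ∧ x j ≠ .star) : x ∈ (Red2 M).shift := by
  set i0 : Fin n := ⟨0, hn⟩
  haveI : Nonempty (Q i0) := ⟨(M i0).start⟩
  obtain ⟨u, hu⟩ := exists_orbit (fun j s => symMap (M i0) (x j) s)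
  refine ⟨fun j => V2.st i0 (u j), fun j => ?_⟩
  beta_reduce
  have h9 := hu j
  rcases hxj : x j with a | _ | _ | _ | _ <;> rw [hxj] at h9
  · rw [show u (j+1) = (M i0).step (u j) a from h9]
    exact Red2Edge.dfaStep _ _ _
  · rw [show u (j+1) = (M i0).start from h9]
    exact Red2Edge.back _ _
  · exact absurd hxj (hx j).1
  · rw [show u (j+1) = u j from h9]
    exact Red2Edge.ellLoop _ _
  · exact absurd hxj (hx j).2

/-- The word obtained by reading off letters in the window `[j, j+k)`. -/
def stripWord (x : ℤ → SymB A) (j : ℤ) : ℕ → List A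
  | 0 => []
  | (k+1) => stripWord x j k ++ (match x (j + k) with | .letter a => [a] | _ => [])

lemma iterSeq_eval {QQ : Type} (D : DFA' QQ A) (x : ℤ → SymB A) (j : ℤ) (k : ℕ)
    (hx : ∀ j', j ≤ j' → j' < j + k → x j' ≠ .lm ∧ x j' ≠ .rm ∧ x j' ≠ .star) (s : QQ) :
    iterSeq (fun j' t => symMap D (x j') t) j k s = D.evalFrom s (stripWord x j k) := by
  induction k with
  | zero => rfl
  | succ k ih =>
    show symMap D (x (j + k)) (iterSeq _ j k s) = _
    rw [ih (fun j' h1 h2 => hx j' h1 (by omega))]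
    have hjk := hx (j + k) (by omega) (by push_cast; omega)
    rcases h : x (j + k) with a | _ | _ | _ | _
    · show D.step _ a = _
      rw [show stripWord x j (k+1) = stripWord x j k ++ [a] from by simp [stripWord, h]]
      rw [evalFrom_append]
      rfl
    · exact absurd h hjk.1
    · exact absurd h hjk.2.1
    · show D.evalFrom s _ = _
      rw [show stripWord x j (k+1) = stripWord x j k ++ [] from by simp [stripWord, h]]
      rw [List.append_nil]
    · exact absurd h hjk.2.2

lemma orbit_iter {S : Type} (f : ℤ → S → S) (u : ℤ → S)
    (hu : ∀ j, u (j+1) = f j (u j)) (j : ℤ) (k : ℕ) :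
    u (j + k) = iterSeq f j k (u j) := by
  induction k with
  | zero => simp [iterSeq]
  | succ k ih =>
    have e : (j + ((k+1 : ℕ) : ℤ)) = (j + k) + 1 := by push_cast; ring
    rw [e, hu (j + k), ih]
    rfl

/-- The allowed two-letter patterns. -/
def Allowed (a b : SymB A) : Prop := b = .star ↔ (a = .star ∨ a = .rm)

/-- The finite forbidden set. -/
def FSet (A : Type) : Set (List (SymB A)) := {w | ∃ a b, w = [a, b] ∧ ¬ Allowed a b}

instance symB_finite [Fintype A] : Finite (SymB A) := by
  apply Finite.of_injective (fun c : SymB A => match c with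
    | .letter a => (Sum.inl a : A ⊕ Fin 4)
    | .lm => .inr 0 | .rm => .inr 1 | .ell => .inr 2 | .star => .inr 3)
  intro c c' h
  cases c <;> cases c' <;> simp_all

lemma FSet_finite [Fintype A] : (FSet A).Finite := by
  apply Set.Finite.subset (Set.finite_range (fun p : SymB A × SymB A => [p.1, p.2]))
  rintro w ⟨a, b, rfl, -⟩
  exact ⟨(a, b), rfl⟩

variable {M : ∀ i, DFA' (Q i) A}

lemma edge_star_iff {p q : V2 Q} {c : SymB A} (h : Red2Edge M p c q) :
    c = .star ↔ p = .t := by cases h <;> simp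

lemma edge_target_t_iff {p q : V2 Q} {c : SymB A} (h : Red2Edge M p c q) :
    q = .t ↔ (c = .star ∨ c = .rm) := by cases h <;> simp

lemma edge_lm_inv {p q : V2 Q} (h : Red2Edge M p .lm q) :
    ∃ i qq, p = V2.st i qq ∧ q = V2.st i (M i).start := by
  cases h; exact ⟨_, _, rfl, rfl⟩

lemma edge_letter_inv {p q : V2 Q} {a : A} (h : Red2Edge M p (.letter a) q) :
    (p = .sstar ∧ q = .sstar) ∨ ∃ i qq, p = V2.st i qq ∧ q = V2.st i ((M i).step qq a) := by
  cases h
  · exact Or.inl ⟨rfl, rfl⟩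
  · exact Or.inr ⟨_, _, rfl, rfl⟩

lemma edge_ell_inv {p q : V2 Q} (h : Red2Edge M p .ell q) :
    (p = .sstar ∧ q = .sstar) ∨ ((∃ i qq, p = V2.st i qq) ∧ q = p) := by
  cases h
  · exact Or.inl ⟨rfl, rfl⟩
  · exact Or.inr ⟨⟨_, _, rfl⟩, rfl⟩

lemma edge_rm_inv {p q : V2 Q} (h : Red2Edge M p .rm q) :
    (p = .sstar ∨ ∃ i qq, p = V2.st i qq ∧ qq ∈ (M i).accept) ∧ q = .t := by
  cases h
  · exact ⟨Or.inl rfl, rfl⟩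
  · exact ⟨Or.inr ⟨_, _, rfl, by assumption⟩, rfl⟩

lemma st_inj {i i' : Fin n} {a : Q i} {b : Q i'} (h : (V2.st i a : V2 Q) = V2.st i' b) :
    i = i' ∧ HEq a b := by
  injection h with h1 h2
  exact ⟨h1, h2⟩

lemma shift_avoids (x : ℤ → SymB A) (hx : x ∈ (Red2 M).shift) (j : ℤ) :
    Allowed (x j) (x (j+1)) := by
  obtain ⟨v, hv⟩ := hx
  show x (j+1) = SymB.star ↔ (x j = SymB.star ∨ x j = SymB.rm)
  exact (edge_star_iff (hv (j+1))).trans (edge_target_t_iff (hv j))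

lemma avoid_iff_allowed (x : ℤ → SymB A) :
    (∀ w ∈ FSet A, ¬ AppearsIn w x) ↔ ∀ j, Allowed (x j) (x (j+1)) := by
  constructor
  · intro h j
    by_contra hc
    apply h [x j, x (j+1)] ⟨_, _, rfl, hc⟩
    refine ⟨j, fun nn => ?_⟩
    fin_cases nn <;> simp
  · rintro h w ⟨a, b, rfl, hab⟩ ⟨i, hi⟩
    have h0 := hi ⟨0, by simp⟩
    have h1 := hi ⟨1, by simp⟩
    simp at h0 h1
    exact hab (h0 ▸ h1 ▸ h i)

lemma star_forward (x : ℤ → SymB A) (h : ∀ j, Allowed (x j) (x (j+1))) (j : ℤ)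
    (hj : x j = .star ∨ x j = .rm) : ∀ j', j < j' → x j' = .star := by
  intro j' hj'
  have key : ∀ j'', j + 1 ≤ j'' → x j'' = .star :=
    Int.le_induction ((h j).mpr hj) (fun m _ ih => (h m).mpr (Or.inl ih))
  exact key j' (by omega)

lemma mem_shift_of_allowed (hn : 0 < n) [∀ i, Fintype (Q i)]
    (hU : ∀ w : List A, ∃ i, w ∈ (M i).lang) (x : ℤ → SymB A)
    (hall : ∀ j, Allowed (x j) (x (j+1))) : x ∈ (Red2 M).shift := by
  by_cases hrm : ∃ p, x p = SymB.rm
  · obtain ⟨p, hp⟩ := hrm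
    have hstar : ∀ j, p < j → x j = .star := star_forward x hall p (Or.inr hp)
    have hbefore : ∀ j, j < p → x j ≠ .rm ∧ x j ≠ .star := by
      intro j hj
      constructor <;> intro hc
      · have := star_forward x hall j (Or.inr hc) p hj
        rw [hp] at this; cases this
      · have := star_forward x hall j (Or.inl hc) p hj
        rw [hp] at this; cases this
    by_cases hlm : ∃ m, (m < p ∧ x m = SymB.lm)
    · obtain ⟨m, ⟨hmp, hmlm⟩, hmax⟩ :=
        Int.exists_greatest_of_bdd (P := fun z => z < p ∧ x z = SymB.lm)
          ⟨p, fun z hz => le_of_lt hz.1⟩ hlm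
      set K := (p - (m+1)).toNat with hK
      have hpK : p = (m+1) + (K : ℤ) := by omega
      obtain ⟨i, hi⟩ := hU (stripWord x (m+1) K)
      haveI : Nonempty (Q i) := ⟨(M i).start⟩
      obtain ⟨u, hu⟩ := exists_orbit (fun j s => symMap (M i) (x j) s)
      have hum1 : u (m+1) = (M i).start := by
        rw [hu m, hmlm]
        rfl
      have hmid : ∀ j', (m+1) ≤ j' → j' < (m+1) + (K:ℤ) →
          x j' ≠ .lm ∧ x j' ≠ .rm ∧ x j' ≠ .star := by
        intro j' h1 h2
        have h2' : j' < p := by omega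
        refine ⟨fun hc => ?_, (hbefore j' h2').1, (hbefore j' h2').2⟩
        have := hmax j' ⟨h2', hc⟩
        omega
      have hup : u p ∈ (M i).accept := by
        rw [hpK, orbit_iter _ u hu (m+1) K, hum1,
          iterSeq_eval (M i) x (m+1) K hmid]
        exact hi
      refine ⟨fun j => if j ≤ p then V2.st i (u j) else V2.t, fun j => ?_⟩
      beta_reduce
      rcases lt_trichotomy j p with h | h | h
      · rw [if_pos (le_of_lt h), if_pos (by omega : j + 1 ≤ p)]
        have h9 := hu j
        rcases hxj : x j with a | _ | _ | _ | _ <;> rw [hxj] at h9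
        · rw [show u (j+1) = (M i).step (u j) a from h9]
          exact Red2Edge.dfaStep _ _ _
        · rw [show u (j+1) = (M i).start from h9]
          exact Red2Edge.back _ _
        · exact absurd hxj (hbefore j h).1
        · rw [show u (j+1) = u j from h9]
          exact Red2Edge.ellLoop _ _
        · exact absurd hxj (hbefore j h).2
      · subst h
        rw [if_pos le_rfl, if_neg (by omega), hp]
        exact Red2Edge.exitAcc i (u j) hup
      · rw [if_neg (by omega), if_neg (by omega), hstar j h]
        exact Red2Edge.tLoop
    · push_neg at hlm
      refine ⟨fun j => if j ≤ p then V2.sstar else V2.t, fun j => ?_⟩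
      beta_reduce
      rcases lt_trichotomy j p with h | h | h
      · rw [if_pos (le_of_lt h), if_pos (by omega : j + 1 ≤ p)]
        rcases hxj : x j with a | _ | _ | _ | _
        · exact Red2Edge.sstarLetter a
        · exact absurd hxj (hlm j h)
        · exact absurd hxj (hbefore j h).1
        · exact Red2Edge.sstarEll
        · exact absurd hxj (hbefore j h).2
      · subst h
        rw [if_pos le_rfl, if_neg (by omega), hp]
        exact Red2Edge.sstarExit
      · rw [if_neg (by omega), if_neg (by omega), hstar j h]
        exact Red2Edge.tLoop
  · push_neg at hrm
    by_cases hst : ∃ q, x q = SymB.star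
    · obtain ⟨q, hq⟩ := hst
      have hall' : ∀ j, x j = .star := by
        have hback : ∀ k : ℕ, x (q - k) = .star := by
          intro k
          induction k with
          | zero => simpa using hq
          | succ k ih =>
            have h9 := hall (q - ((k+1:ℕ):ℤ))
            have e : q - ((k+1:ℕ):ℤ) + 1 = q - (k:ℕ) := by push_cast; ring
            rw [e] at h9
            rcases h9.mp ih with h | h
            · exact h
            · exact absurd h (hrm _)
        intro j
        rcases le_or_gt j q with h | h
        · have e : j = q - (((q - j).toNat : ℕ) : ℤ) := by omega
          rw [e]; exact hback _
        · exact star_forward x hall q (Or.inl hq) j h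
      exact ⟨fun _ => V2.t, fun j => by rw [hall' j]; exact Red2Edge.tLoop⟩
    · push_neg at hst
      exact shift_of_tame hn M x (fun j => ⟨hrm j, hst j⟩)

lemma isSFT_of_univ (hn : 0 < n) [Fintype A] [∀ i, Fintype (Q i)]
    (hU : (⋃ i, (M i).lang) = Set.univ) : IsSFT (Red2 M).shift := by
  have hU' : ∀ w : List A, ∃ i, w ∈ (M i).lang := fun w =>
    Set.mem_iUnion.mp (hU ▸ Set.mem_univ w)
  refine ⟨FSet A, FSet_finite, Set.ext fun x => ⟨fun hx => ?_, fun hx => ?_⟩⟩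
  · exact (avoid_iff_allowed x).mpr (shift_avoids x hx)
  · exact mem_shift_of_allowed hn hU' x ((avoid_iff_allowed x).mp hx)

/-- The witness sequence `…ℓℓℓ ◁ v ℓ^N ▷ ⋆⋆⋆…`. -/
def badSeq (v : List A) (N : ℕ) : ℤ → SymB A := fun j =>
  if hj : 1 ≤ j ∧ j ≤ (v.length : ℤ) then .letter (v.get ⟨(j-1).toNat, by omega⟩)
  else if j = 0 then .lm
  else if j ≤ (v.length : ℤ) + N then .ell
  else if j = (v.length : ℤ) + N + 1 then .rm
  else .star

lemma badSeq_zero (v : List A) (N : ℕ) : badSeq v N 0 = .lm := by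
  simp only [badSeq]
  split_ifs <;> first | rfl | omega

lemma badSeq_letter (v : List A) (N : ℕ) (m : ℕ) (hm : m < v.length) :
    badSeq v N (1 + (m:ℤ)) = .letter (v.get ⟨m, hm⟩) := by
  simp only [badSeq]
  rw [dif_pos (by omega)]
  congr 1
  have : ((1 + (m:ℤ)) - 1).toNat = m := by omega
  simp [this]

lemma badSeq_mid (v : List A) (N : ℕ) (j : ℤ) (h1 : (v.length:ℤ) < j)
    (h2 : j ≤ (v.length:ℤ) + N) : badSeq v N j = .ell := by
  simp only [badSeq]
  split_ifs <;> first | rfl | omega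

lemma badSeq_rm (v : List A) (N : ℕ) : badSeq v N ((v.length:ℤ) + N + 1) = .rm := by
  simp only [badSeq]
  split_ifs <;> first | rfl | omega

lemma badSeq_star (v : List A) (N : ℕ) (j : ℤ) (h : (v.length:ℤ) + N + 1 < j) :
    badSeq v N j = .star := by
  simp only [badSeq]
  split_ifs <;> first | rfl | omega

lemma badSeq_ne (v : List A) (N : ℕ) (j : ℤ) (h : j < (v.length:ℤ) + N + 1) :
    badSeq v N j ≠ .rm ∧ badSeq v N j ≠ .star := by
  simp only [badSeq]
  split_ifs <;> first | (exfalso; omega) | simp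

lemma univ_of_isSFT (hn : 0 < n) [∀ i, Fintype (Q i)]
    (M : ∀ i, DFA' (Q i) A) (hS : IsSFT (Red2 M).shift) :
    (⋃ i, (M i).lang) = Set.univ := by
  by_contra hne
  obtain ⟨v, hv⟩ := (Set.ne_univ_iff_exists_notMem _).mp hne
  obtain ⟨F, hFfin, hF⟩ := hS
  set N := hFfin.toFinset.sup List.length with hN
  have hlen : ∀ w ∈ F, w.length ≤ N := fun w hw =>
    Finset.le_sup (hFfin.mem_toFinset.mpr hw)
  set L : ℕ := v.length with hL
  set x := badSeq v N with hx
  set P : ℤ := (L:ℤ) + N + 1 with hP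
  have hnotin : ∀ w ∈ F, ∀ y, y ∈ (Red2 M).shift → ¬ AppearsIn w y := by
    intro w hw y hy
    rw [hF] at hy
    exact hy w hw
  have hxmem : ∀ w ∈ F, ¬ AppearsIn w x := by
    rintro w hw ⟨i, hi⟩
    have hk : w.length ≤ N := hlen w hw
    by_cases hcase : i + (w.length : ℤ) ≤ P
    · set y : ℤ → SymB A := fun j => if j < P then x j else .ell with hy
      have hys : y ∈ (Red2 M).shift := by
        apply shift_of_tame hn M
        intro j
        simp only [hy]
        split_ifs with h1
        · exact badSeq_ne v N j h1
        · exact ⟨fun hc => (by cases hc), fun hc => (by cases hc)⟩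
      refine hnotin w hw y hys ⟨i, fun nn => ?_⟩
      have hnn := nn.isLt
      simp only [hy]
      rw [if_pos (by omega)]
      exact hi nn
    · set z : ℤ → SymB A := fun j => if j < P then SymB.ell else if j = P then .rm else .star
        with hz
      have hzs : z ∈ (Red2 M).shift := by
        refine ⟨fun j => if j ≤ P then V2.sstar else V2.t, fun j => ?_⟩
        beta_reduce
        rcases lt_trichotomy j P with h | h | h
        · rw [if_pos (le_of_lt h), if_pos (by omega : j + 1 ≤ P)]
          simp only [hz]
          rw [if_pos h]
          exact Red2Edge.sstarEll
        · subst h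
          rw [if_pos le_rfl, if_neg (by omega)]
          simp only [hz]
          rw [if_neg (by omega)]
          simp only [if_true]
          exact Red2Edge.sstarExit
        · rw [if_neg (by omega), if_neg (by omega)]
          simp only [hz]
          rw [if_neg (by omega), if_neg (by omega)]
          exact Red2Edge.tLoop
      have hxz : ∀ j, (L:ℤ) + 1 ≤ j → x j = z j := by
        intro j hj
        simp only [hz]
        split_ifs with h1 h2
        · exact badSeq_mid v N j (by omega) (by omega)
        · rw [h2]; exact badSeq_rm v N
        · exact badSeq_star v N j (by omega)
      refine hnotin w hw z hzs ⟨i, fun nn => ?_⟩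
      have hnn := nn.isLt
      rw [← hxz _ (by omega)]
      exact hi nn
  have hxs : x ∈ (Red2 M).shift := by
    rw [hF]
    exact hxmem
  obtain ⟨wp, hwp⟩ := hxs
  have h0 := hwp 0
  rw [show x 0 = SymB.lm from badSeq_zero v N] at h0
  obtain ⟨i, q0, hq0, h1⟩ := edge_lm_inv h0
  have key : ∀ m : ℕ, m ≤ L + N →
      wp (1 + (m:ℤ)) = V2.st i ((M i).evalFrom (M i).start (v.take m)) := by
    intro m
    induction m with
    | zero =>
      intro _
      simpa [DFA'.evalFrom] using h1
    | succ m ih =>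
      intro hm
      have e := hwp (1 + (m:ℤ))
      rw [ih (by omega)] at e
      have ecast : (1 + ((m+1:ℕ):ℤ)) = (1 + (m:ℤ)) + 1 := by push_cast; ring
      rcases lt_or_ge m L with hml | hml
      · rw [show x (1 + (m:ℤ)) = .letter (v.get ⟨m, hml⟩) from badSeq_letter v N m hml] at e
        rcases edge_letter_inv e with ⟨hc, -⟩ | ⟨i', qq, hpq, hq⟩
        · exact absurd hc (by simp)
        · obtain ⟨h5, h6⟩ := st_inj hpq
          subst h5
          rw [ecast, hq, eq_of_heq h6.symm]
          congr 1
          rw [show v.take (m+1) = v.take m ++ [v.get ⟨m, hml⟩] from by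
            simpa using (List.take_concat_get v m hml).symm]
          rw [evalFrom_append]
          rfl
      · rw [show x (1 + (m:ℤ)) = SymB.ell from badSeq_mid v N _ (by omega) (by omega)] at e
        rcases edge_ell_inv e with ⟨hc, -⟩ | ⟨-, hq⟩
        · exact absurd hc (by simp)
        · rw [ecast, hq]
          congr 2
          rw [List.take_of_length_le (by omega), List.take_of_length_le (by omega)]
  have final := hwp P
  rw [show x P = SymB.rm from badSeq_rm v N] at final
  have hkey := key (L + N) le_rfl
  rw [show (1 + ((L+N:ℕ):ℤ)) = P from by simp [hP]; push_cast; ring] at hkey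
  rw [hkey] at final
  obtain ⟨hsrc, -⟩ := edge_rm_inv final
  rcases hsrc with h | ⟨i', qq, hpq, hacc⟩
  · exact absurd h (by simp)
  · obtain ⟨h5, h6⟩ := st_inj hpq
    subst h5
    apply hv
    refine Set.mem_iUnion.mpr ⟨i, ?_⟩
    show (M i).evalFrom (M i).start v ∈ (M i).accept
    rw [show v = v.take (L + N) from (List.take_of_length_le (by omega)).symm]
    rw [eq_of_heq h6]
    exact hacc

end Red2Lemmas

/-- Let `M_1, …, M_n` be DFAs over a common alphabet `Σ`, and let `G` be the
graph of the second reduction construction. Then `⋃ᵢ L(Mᵢ) = Σ*` iff `⟨G⟩` is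
a shift of finite type. -/
theorem stmt14 {n : ℕ} {Q : Fin n → Type} {A : Type}
    [Fintype A] [∀ i, Fintype (Q i)] (hn : 0 < n)
    (M : ∀ i, DFA' (Q i) A) :
    (⋃ i, (M i).lang) = Set.univ ↔ IsSFT (Red2 M).shift := by
  constructor
  · intro hU
    exact isSFT_of_univ hn hU
  · intro hS
    exact univ_of_isSFT hn M hS
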